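/- Let d ≥ 1, α < 2 and 0 < q < p < ∞. Then Ψ_{α,q} = 𝔓_{α,p→q} ∘ Ψ_{α,p}: the domains coincide, i.e. 𝔇(Ψ_{α,q}) = {M ∈ 𝔇(Ψ_{α,p}) : Ψ_{α,p}M ∈ 𝔇(𝔓_{α,p→q})}, and for every M in this common domain one has 𝔓_{α,p→q}(Ψ_{α,p} M) = Ψ_{α,q} M as measures on ℝ^d. -/

import Mathlib

open MeasureTheory Set

noncomputable section

variable {E : Type*} [NormedAddCommGroup E] [NormedSpace ℝ E]
  [MeasurableSpace E] [BorelSpace E]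

/-- The upsilon transform with dilation measure `ρ` on `(0,∞) ⊆ ℝ`:
`[Υ_ρ M](B) = ∫ M(s⁻¹ B) ρ(ds)`, realized as the image of `ρ ⊗ M` under `(s, x) ↦ s • x`. -/
def Upsilon (ρ : Measure ℝ) (M : Measure E) : Measure E :=
  Measure.map (fun sx : ℝ × E => sx.1 • sx.2) (ρ.prod M)

/-- `M` is a Lévy measure: σ-finite, no mass at `0`, and `∫ (|x|² ∧ 1) M(dx) < ∞`. -/
def IsLevyMeasure (M : Measure E) : Prop :=
  SigmaFinite M ∧ M {0} = 0 ∧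
    ∫⁻ x, ENNReal.ofReal (min (‖x‖ ^ 2) 1) ∂M < ⊤

/-- The domain `𝔇(Υ_ρ)`: Lévy measures `M` such that `Υ_ρ M` is again a Lévy measure. -/
def UpsilonDomain (ρ : Measure ℝ) : Set (Measure E) :=
  {M | IsLevyMeasure M ∧ IsLevyMeasure (Upsilon ρ M)}

/-- The range `ℜ(Υ_ρ) = {Υ_ρ M : M ∈ 𝔇(Υ_ρ)}`. -/
def UpsilonRange (ρ : Measure ℝ) : Set (Measure E) :=
  Upsilon ρ '' UpsilonDomain (E := E) ρ

/-- The class `𝔐^α`: Borel measures with `M({0}) = 0` and `∫ (|x|² ∧ |x|^α) M(dx) < ∞`. -/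
def MemMAlpha (α : ℝ) (M : Measure E) : Prop :=
  M {0} = 0 ∧ ∫⁻ x, ENNReal.ofReal (min (‖x‖ ^ 2) (‖x‖ ^ α)) ∂M < ⊤

/-- The class `𝔐^log`: Lévy measures with `∫_{|x|>1} log|x| M(dx) < ∞`. -/
def MemMLog (M : Measure E) : Prop :=
  IsLevyMeasure M ∧
    ∫⁻ x in {x : E | 1 < ‖x‖}, ENNReal.ofReal (Real.log ‖x‖) ∂M < ⊤

/-- The dilation measure `ψ_{α,p}(ds) = s^{-α-1} e^{-s^p} 1_{s>0} ds`. -/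
def psiMeasure (α p : ℝ) : Measure ℝ :=
  (volume : Measure ℝ).withDensity fun s =>
    if 0 < s then ENNReal.ofReal (s ^ (-α - 1) * Real.exp (-(s ^ p))) else 0

/-- `K_{α,β,p} = ∫₀^∞ u^{α-β-1} e^{-u^p} du`. -/
def Kconst (α β p : ℝ) : ℝ :=
  ∫ u in Ioi (0 : ℝ), u ^ (α - β - 1) * Real.exp (-(u ^ p))

/-- The dilation measure
`τ_{β→α,p}(ds) = K_{α,β,p}⁻¹ s^{-α-1} (1-s^p)^{(α-β)/p - 1} 1_{0<s<1} ds`. -/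
def tauMeasure (β α p : ℝ) : Measure ℝ :=
  (volume : Measure ℝ).withDensity fun s =>
    if 0 < s ∧ s < 1 then
      ENNReal.ofReal ((Kconst α β p)⁻¹ * (s ^ (-α - 1) * (1 - s ^ p) ^ ((α - β) / p - 1)))
    else 0

/-- `f` is the density of the fully right-skewed `r`-stable distribution on `(0,∞)`:
a nonnegative measurable function with `∫₀^∞ e^{-t x} f(x) dx = e^{-t^r}` for all `t ≥ 0`. -/
def IsStableDensity (r : ℝ) (f : ℝ → ℝ) : Prop :=
  Measurable f ∧ (∀ x, 0 ≤ f x) ∧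
    ∀ t : ℝ, 0 ≤ t →
      ∫ x in Ioi (0 : ℝ), Real.exp (-(t * x)) * f x = Real.exp (-(t ^ r))

/-- The dilation measure `π_{α,p→q}(ds) = p f_{q/p}(s^{-p}) s^{-α-p-1} 1_{s>0} ds`,
where `f` is (to be assumed) the density of the fully right-skewed `q/p`-stable law. -/
def piMeasure (f : ℝ → ℝ) (α p : ℝ) : Measure ℝ :=
  (volume : Measure ℝ).withDensity fun s =>
    if 0 < s then ENNReal.ofReal (p * f (s ^ (-p)) * s ^ (-α - p - 1)) else 0

/-- The measure `ρ(ds) = g(s) 1_{s>0} ds`. -/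
def densMeasure (g : ℝ → ℝ) : Measure ℝ :=
  (volume : Measure ℝ).withDensity fun s => if 0 < s then ENNReal.ofReal (g s) else 0


open scoped ENNReal

section Stmt10Aux

lemma stmt10_measurable_smul2 : Measurable (fun sx : ℝ × E => sx.1 • sx.2) :=
  (continuous_fst.smul continuous_snd).measurable

lemma stmt10_upsilon_apply (ρ : Measure ℝ) (M : Measure E) [SigmaFinite M] {B : Set E}
    (hB : MeasurableSet B) :
    Upsilon ρ M B = ∫⁻ s, M ((fun x => s • x) ⁻¹' B) ∂ρ := by
  rw [Upsilon, Measure.map_apply stmt10_measurable_smul2 hB,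
    Measure.prod_apply (stmt10_measurable_smul2 hB)]
  rfl

lemma stmt10_measurable_section (M : Measure E) [SigmaFinite M] {B : Set E}
    (hB : MeasurableSet B) :
    Measurable fun s : ℝ => M ((fun x => s • x) ⁻¹' B) :=
  measurable_measure_prodMk_left (stmt10_measurable_smul2 hB)

lemma stmt10_lintegral_image {s : Set ℝ} {f : ℝ → ℝ} {f' : ℝ → ℝ}
    (hs : MeasurableSet s) (hf' : ∀ x ∈ s, HasDerivWithinAt f (f' x) s x)
    (hf : InjOn f s) (g : ℝ → ℝ≥0∞) :
    ∫⁻ x in f '' s, g x = ∫⁻ x in s, ENNReal.ofReal (|f' x|) * g (f x) := by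
  simpa only [ContinuousLinearMap.det_toSpanSingleton] using
    lintegral_image_eq_lintegral_abs_det_fderiv_mul volume hs
      (fun x hx => (hf' x hx).hasFDerivWithinAt) hf g

lemma stmt10_upsilon_lintegral (ρ : Measure ℝ) (M : Measure E) [SigmaFinite M]
    {g : E → ℝ≥0∞} (hg : Measurable g) :
    ∫⁻ y, g y ∂(Upsilon ρ M) = ∫⁻ s, ∫⁻ x, g (s • x) ∂M ∂ρ := by
  rw [Upsilon, lintegral_map hg stmt10_measurable_smul2]
  exact lintegral_prod (fun z => g (z.1 • z.2))
    (hg.comp stmt10_measurable_smul2).aemeasurable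

lemma stmt10_gmeas : Measurable fun x : E => ENNReal.ofReal (min (‖x‖ ^ 2) 1) :=
  (((measurable_norm).pow_const 2).min measurable_const).ennreal_ofReal

lemma stmt10_sigmaFinite_of_levy (ν : Measure E) (h0 : ν {0} = 0)
    (hfin : ∫⁻ x, ENNReal.ofReal (min (‖x‖ ^ 2) 1) ∂ν < ⊤) :
    SigmaFinite ν := by
  constructor
  refine ⟨⟨fun n => {0} ∪ {x : E | (1 : ℝ) / (n + 1) < ‖x‖}, fun _ => trivial, ?_, ?_⟩⟩
  · intro n
    set c : ℝ := 1 / (n + 1) with hc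
    have hcpos : 0 < c := by positivity
    set ε : ℝ≥0∞ := ENNReal.ofReal (min (c ^ 2) 1) with hε
    have hεpos : 0 < ε := by
      rw [hε]; apply ENNReal.ofReal_pos.2; positivity
    have hsub : {x : E | c < ‖x‖} ⊆ {x : E | ε ≤ ENNReal.ofReal (min (‖x‖ ^ 2) 1)} := by
      intro x hx
      simp only [mem_setOf_eq] at hx ⊢
      apply ENNReal.ofReal_le_ofReal
      have : c ^ 2 ≤ ‖x‖ ^ 2 := by nlinarith [norm_nonneg x]
      simp only [le_min_iff, min_le_iff]
      exact ⟨Or.inl this, Or.inr le_rfl⟩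
    have hmar := mul_meas_ge_le_lintegral (μ := ν) stmt10_gmeas ε
    have h1 : ν {x : E | c < ‖x‖} < ⊤ := by
      by_contra h
      push_neg at h
      have h2 : ν {x : E | ε ≤ ENNReal.ofReal (min (‖x‖ ^ 2) 1)} = ⊤ :=
        top_le_iff.mp (le_trans (top_le_iff.mpr (top_le_iff.mp h)) (measure_mono hsub))
      rw [h2, ENNReal.mul_top hεpos.ne'] at hmar
      exact absurd (lt_of_le_of_lt hmar hfin) (lt_irrefl _)
    calc ν ({0} ∪ {x : E | c < ‖x‖}) ≤ ν {0} + ν {x : E | c < ‖x‖} := measure_union_le _ _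
    _ < ⊤ := by rw [h0, zero_add]; exact h1
  · apply eq_univ_of_forall
    intro x
    rcases eq_or_ne x 0 with rfl | hx
    · exact mem_iUnion.2 ⟨0, Or.inl rfl⟩
    · have hxn : 0 < ‖x‖ := norm_pos_iff.mpr hx
      obtain ⟨n, hn⟩ := exists_nat_one_div_lt hxn
      exact mem_iUnion.2 ⟨n, Or.inr hn⟩

lemma stmt10_withDensity_singleton_zero (w : ℝ → ℝ≥0∞) :
    ((volume : Measure ℝ).withDensity w) {0} = 0 :=
  (withDensity_absolutelyContinuous _ _) (measure_singleton 0)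

lemma stmt10_lintegral_withDensity_if {c : ℝ → ℝ} (hc : Measurable c) {G : ℝ → ℝ≥0∞}
    (hG : Measurable G) :
    ∫⁻ a, G a ∂((volume : Measure ℝ).withDensity fun s =>
        if 0 < s then ENNReal.ofReal (c s) else 0)
      = ∫⁻ a in Ioi (0 : ℝ), ENNReal.ofReal (c a) * G a := by
  have hw : Measurable fun s : ℝ => if 0 < s then ENNReal.ofReal (c s) else 0 :=
    Measurable.ite measurableSet_Ioi hc.ennreal_ofReal measurable_const
  rw [lintegral_withDensity_eq_lintegral_mul _ hw hG,
    ← lintegral_indicator measurableSet_Ioi]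
  congr 1
  funext a
  by_cases ha : 0 < a <;> simp [indicator, ha, mem_Ioi]

lemma stmt10_enn_cancel (a b c : ℝ≥0∞) (h0 : b ≠ 0) (ht : b ≠ ⊤) :
    a * b⁻¹ * (b * c) = a * c := by
  rw [mul_assoc, ← mul_assoc b⁻¹, ENNReal.inv_mul_cancel h0 ht, one_mul]

lemma stmt10_psi_dens_measurable (α p : ℝ) :
    Measurable fun s : ℝ => s ^ (-α - 1) * Real.exp (-(s ^ p)) :=
  (measurable_id.pow_const _).mul ((measurable_id.pow_const p).neg.exp)

lemma stmt10_pi_dens_measurable (f : ℝ → ℝ) (hf : Measurable f) (α p : ℝ) :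
    Measurable fun s : ℝ => p * f (s ^ (-p)) * s ^ (-α - p - 1) :=
  ((hf.comp (measurable_id.pow_const (-p))).const_mul p).mul (measurable_id.pow_const _)

lemma stmt10_lintegral_psiMeasure (α p : ℝ) {G : ℝ → ℝ≥0∞} (hG : Measurable G) :
    ∫⁻ a, G a ∂(psiMeasure α p)
      = ∫⁻ a in Ioi (0 : ℝ), ENNReal.ofReal (a ^ (-α - 1) * Real.exp (-(a ^ p))) * G a :=
  stmt10_lintegral_withDensity_if (stmt10_psi_dens_measurable α p) hG

lemma stmt10_lintegral_piMeasure (f : ℝ → ℝ) (hfm : Measurable f) (α p : ℝ) {G : ℝ → ℝ≥0∞}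
    (hG : Measurable G) :
    ∫⁻ a, G a ∂(piMeasure f α p)
      = ∫⁻ a in Ioi (0 : ℝ),
          ENNReal.ofReal (p * f (a ^ (-p)) * a ^ (-α - p - 1)) * G a :=
  stmt10_lintegral_withDensity_if (stmt10_pi_dens_measurable f hfm α p) hG

lemma stmt10_psi_density_le (α q p s : ℝ) (hq : 0 < q) (hqp : q < p) (hs : 0 < s) :
    s ^ (-α - 1) * Real.exp (-(s ^ p))
      ≤ Real.exp 1 * (s ^ (-α - 1) * Real.exp (-(s ^ q))) := by
  have hA : 0 ≤ s ^ (-α - 1) := Real.rpow_nonneg hs.le _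
  have key : s ^ q ≤ 1 + s ^ p := by
    rcases le_total s 1 with h | h
    · have h1 : s ^ q ≤ 1 := Real.rpow_le_one hs.le h hq.le
      nlinarith [Real.rpow_nonneg hs.le p]
    · have h2 : s ^ q ≤ s ^ p := Real.rpow_le_rpow_of_exponent_le h hqp.le
      linarith
  have hexp : Real.exp (-(s ^ p)) ≤ Real.exp 1 * Real.exp (-(s ^ q)) := by
    rw [← Real.exp_add]
    exact Real.exp_le_exp.mpr (by linarith)
  calc s ^ (-α - 1) * Real.exp (-(s ^ p))
      ≤ s ^ (-α - 1) * (Real.exp 1 * Real.exp (-(s ^ q))) :=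
        mul_le_mul_of_nonneg_left hexp hA
    _ = Real.exp 1 * (s ^ (-α - 1) * Real.exp (-(s ^ q))) := by ring

lemma stmt10_rpow_image_Ioi (p : ℝ) (hp : 0 < p) :
    (fun t : ℝ => t ^ (-p)) '' Ioi 0 = Ioi 0 := by
  ext u
  constructor
  · rintro ⟨t, ht, rfl⟩
    exact Real.rpow_pos_of_pos ht _
  · intro hu
    refine ⟨u ^ (-p⁻¹), Real.rpow_pos_of_pos hu _, ?_⟩
    show (u ^ (-p⁻¹)) ^ (-p) = u
    rw [← Real.rpow_mul hu.le, (by field_simp : -p⁻¹ * -p = (1:ℝ)), Real.rpow_one]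

lemma stmt10_rpow_injOn_Ioi (p : ℝ) (hp : 0 < p) :
    InjOn (fun t : ℝ => t ^ (-p)) (Ioi 0) := by
  intro a ha b hb h
  simp only at h
  have ha' : (0:ℝ) < a := ha
  have hb' : (0:ℝ) < b := hb
  have h2 : (a ^ (-p)) ^ (-p⁻¹) = (b ^ (-p)) ^ (-p⁻¹) := by rw [h]
  rwa [← Real.rpow_mul ha'.le, ← Real.rpow_mul hb'.le,
    (by field_simp : -p * -p⁻¹ = (1:ℝ)), Real.rpow_one, Real.rpow_one] at h2

lemma stmt10_heart (α q p : ℝ) (hq : 0 < q) (hqp : q < p) (f : ℝ → ℝ)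
    (hf : IsStableDensity (q / p) f) {u : ℝ} (hu : 0 < u) :
    ∫⁻ t in Ioi (0:ℝ),
        ENNReal.ofReal (p * f (t ^ (-p)) * t ^ (-α - p - 1)) * (ENNReal.ofReal t)⁻¹ *
          ENNReal.ofReal ((u / t) ^ (-α - 1) * Real.exp (-((u / t) ^ p)))
      = ENNReal.ofReal (u ^ (-α - 1) * Real.exp (-(u ^ q))) := by
  have hp : 0 < p := hq.trans hqp
  have hcong : ∀ t ∈ Ioi (0:ℝ),
      ENNReal.ofReal (p * f (t ^ (-p)) * t ^ (-α - p - 1)) * (ENNReal.ofReal t)⁻¹ *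
          ENNReal.ofReal ((u / t) ^ (-α - 1) * Real.exp (-((u / t) ^ p)))
        = ENNReal.ofReal (u ^ (-α - 1)) *
            (ENNReal.ofReal (|(-p) * t ^ (-p - 1)|) *
              ENNReal.ofReal (f (t ^ (-p)) * Real.exp (-(u ^ p * t ^ (-p))))) := by
    intro t ht
    have ht' : (0:ℝ) < t := ht
    have hfnn := hf.2.1 (t ^ (-p))
    have hA : (0:ℝ) ≤ p * f (t ^ (-p)) * t ^ (-α - p - 1) := by positivity
    have habs : |(-p) * t ^ (-p - 1)| = p * t ^ (-p - 1) := by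
      rw [abs_mul, abs_neg, abs_of_pos hp, abs_of_pos (Real.rpow_pos_of_pos ht' _)]
    rw [← ENNReal.ofReal_inv_of_pos ht', ← ENNReal.ofReal_mul hA,
      ← ENNReal.ofReal_mul (by positivity), habs,
      ← ENNReal.ofReal_mul (by positivity),
      ← ENNReal.ofReal_mul (Real.rpow_nonneg hu.le _)]
    congr 1
    have h1 : (u / t) ^ (-α - 1) = u ^ (-α - 1) * t ^ (-(-α - 1)) := by
      rw [div_eq_mul_inv, Real.mul_rpow hu.le (inv_nonneg.mpr ht'.le),
        Real.inv_rpow ht'.le, ← Real.rpow_neg ht'.le]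
    have h2 : (u / t) ^ p = u ^ p * t ^ (-p) := by
      rw [div_eq_mul_inv, Real.mul_rpow hu.le (inv_nonneg.mpr ht'.le),
        Real.inv_rpow ht'.le, ← Real.rpow_neg ht'.le]
    have h3 : t ^ (-α - p - 1) * t⁻¹ * t ^ (-(-α - 1)) = t ^ (-p - 1) := by
      rw [← Real.rpow_neg_one t, ← Real.rpow_add ht', ← Real.rpow_add ht']
      congr 1
      ring
    rw [h1, h2]
    calc p * f (t ^ (-p)) * t ^ (-α - p - 1) * t⁻¹ *
          (u ^ (-α - 1) * t ^ (-(-α - 1)) * Real.exp (-(u ^ p * t ^ (-p))))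
        = u ^ (-α - 1) * ((t ^ (-α - p - 1) * t⁻¹ * t ^ (-(-α - 1))) *
            (p * (f (t ^ (-p)) * Real.exp (-(u ^ p * t ^ (-p)))))) := by ring
      _ = u ^ (-α - 1) * (p * t ^ (-p - 1) *
            (f (t ^ (-p)) * Real.exp (-(u ^ p * t ^ (-p))))) := by
          rw [h3]; ring
  rw [setLIntegral_congr_fun measurableSet_Ioi hcong]
  have hmeas : Measurable fun t : ℝ => ENNReal.ofReal (|(-p) * t ^ (-p - 1)|) *
      ENNReal.ofReal (f (t ^ (-p)) * Real.exp (-(u ^ p * t ^ (-p)))) := by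
    apply Measurable.fun_mul
    · exact ((measurable_id.pow_const (-p - 1)).const_mul (-p)).abs.ennreal_ofReal
    · exact ((hf.1.comp (measurable_id.pow_const (-p))).mul
        (((measurable_id.pow_const (-p)).const_mul (u ^ p)).neg.exp)).ennreal_ofReal
  rw [lintegral_const_mul _ hmeas]
  have hderiv : ∀ t ∈ Ioi (0:ℝ),
      HasDerivWithinAt (fun t : ℝ => t ^ (-p)) ((-p) * t ^ (-p - 1)) (Ioi 0) t := by
    intro t ht
    exact (Real.hasDerivAt_rpow_const (Or.inl (ne_of_gt ht))).hasDerivWithinAt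
  have key2 := stmt10_lintegral_image measurableSet_Ioi hderiv (stmt10_rpow_injOn_Ioi p hp)
    (fun x => ENNReal.ofReal (f x * Real.exp (-(u ^ p * x))))
  rw [stmt10_rpow_image_Ioi p hp] at key2
  rw [← key2]
  have hLap : ∫⁻ x in Ioi (0:ℝ), ENNReal.ofReal (f x * Real.exp (-(u ^ p * x)))
      = ENNReal.ofReal (Real.exp (-(u ^ q))) := by
    have ht0 : (0:ℝ) ≤ u ^ p := (Real.rpow_pos_of_pos hu p).le
    have hint := hf.2.2 (u ^ p) ht0
    have hexp : ((u:ℝ) ^ p) ^ (q / p) = u ^ q := by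
      rw [← Real.rpow_mul hu.le]
      congr 1
      field_simp
    have hig : IntegrableOn (fun x => Real.exp (-(u ^ p * x)) * f x) (Ioi 0) volume := by
      by_contra hni
      rw [MeasureTheory.integral_undef hni] at hint
      exact (Real.exp_pos _).ne' hint.symm
    have h2 := MeasureTheory.ofReal_integral_eq_lintegral_ofReal hig
        (Filter.Eventually.of_forall fun x => mul_nonneg (Real.exp_pos _).le (hf.2.1 x))
    rw [hint, hexp] at h2
    calc ∫⁻ x in Ioi (0:ℝ), ENNReal.ofReal (f x * Real.exp (-(u ^ p * x)))
        = ∫⁻ x in Ioi (0:ℝ), ENNReal.ofReal (Real.exp (-(u ^ p * x)) * f x) :=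
          lintegral_congr fun x => by rw [mul_comm]
      _ = ENNReal.ofReal (Real.exp (-(u ^ q))) := h2.symm
  rw [hLap, ← ENNReal.ofReal_mul (Real.rpow_nonneg hu.le _)]

lemma stmt10_convKey (α q p : ℝ) (hq : 0 < q) (hqp : q < p) (f : ℝ → ℝ)
    (hf : IsStableDensity (q / p) f) {F : ℝ → ℝ≥0∞} (hF : Measurable F) :
    ∫⁻ t, ∫⁻ s, F (t * s) ∂(psiMeasure α p) ∂(piMeasure f α p)
      = ∫⁻ u, F u ∂(psiMeasure α q) := by
  have hp : 0 < p := hq.trans hqp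
  have hCp := stmt10_psi_dens_measurable α p
  have hCpi := stmt10_pi_dens_measurable f hf.1 α p
  have step1 : ∀ t : ℝ, ∫⁻ s, F (t * s) ∂(psiMeasure α p)
      = ∫⁻ s in Ioi (0:ℝ), ENNReal.ofReal (s ^ (-α - 1) * Real.exp (-(s ^ p))) * F (t * s) :=
    fun t => stmt10_lintegral_psiMeasure α p (hF.comp (measurable_id.const_mul t))
  rw [lintegral_congr step1]
  have hGmeas : Measurable fun t : ℝ =>
      ∫⁻ s in Ioi (0:ℝ), ENNReal.ofReal (s ^ (-α - 1) * Real.exp (-(s ^ p))) * F (t * s) := by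
    have hjoint : Measurable fun z : ℝ × ℝ =>
        ENNReal.ofReal (z.2 ^ (-α - 1) * Real.exp (-(z.2 ^ p))) * F (z.1 * z.2) :=
      ((hCp.comp measurable_snd).ennreal_ofReal).mul
        (hF.comp (measurable_fst.mul measurable_snd))
    exact Measurable.lintegral_prod_right' hjoint
  rw [stmt10_lintegral_piMeasure f hf.1 α p hGmeas]
  have hbodymeas : ∀ t : ℝ, Measurable fun u : ℝ =>
      ENNReal.ofReal ((u / t) ^ (-α - 1) * Real.exp (-((u / t) ^ p))) * F u := by
    intro t
    exact ((hCp.comp (measurable_id.div_const t)).ennreal_ofReal).mul hF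
  have hsub : ∀ t ∈ Ioi (0:ℝ),
      ENNReal.ofReal (p * f (t ^ (-p)) * t ^ (-α - p - 1)) *
        ∫⁻ s in Ioi (0:ℝ), ENNReal.ofReal (s ^ (-α - 1) * Real.exp (-(s ^ p))) * F (t * s)
      = ∫⁻ u in Ioi (0:ℝ),
          ENNReal.ofReal (p * f (t ^ (-p)) * t ^ (-α - p - 1)) * (ENNReal.ofReal t)⁻¹ *
            (ENNReal.ofReal ((u / t) ^ (-α - 1) * Real.exp (-((u / t) ^ p))) * F u) := by
    intro t ht
    have ht' : (0:ℝ) < t := ht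
    have himg : (fun s : ℝ => t * s) '' Ioi 0 = Ioi 0 := by
      ext u
      constructor
      · rintro ⟨s, hs, rfl⟩
        exact mul_pos ht' hs
      · intro hu
        exact ⟨u / t, div_pos hu ht', by field_simp⟩
    have hderiv : ∀ s ∈ Ioi (0:ℝ), HasDerivWithinAt (fun s : ℝ => t * s) t (Ioi 0) s :=
      fun s _ => by simpa using ((hasDerivAt_id s).const_mul t).hasDerivWithinAt
    have hinj : InjOn (fun s : ℝ => t * s) (Ioi 0) :=
      fun a _ b _ h => mul_left_cancel₀ ht'.ne' h
    have key := stmt10_lintegral_image measurableSet_Ioi hderiv hinj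
      (fun u => ENNReal.ofReal ((u / t) ^ (-α - 1) * Real.exp (-((u / t) ^ p))) * F u)
    rw [himg] at key
    have hre : ∀ s : ℝ, ENNReal.ofReal |t| *
          (ENNReal.ofReal ((t * s / t) ^ (-α - 1) * Real.exp (-((t * s / t) ^ p))) * F (t * s))
        = ENNReal.ofReal t *
          (ENNReal.ofReal (s ^ (-α - 1) * Real.exp (-(s ^ p))) * F (t * s)) := by
      intro s
      rw [mul_div_cancel_left₀ s ht'.ne', abs_of_pos ht']
    rw [lintegral_congr hre] at key
    have h1 : Measurable fun s : ℝ =>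
        ENNReal.ofReal (s ^ (-α - 1) * Real.exp (-(s ^ p))) * F (t * s) :=
      (hCp.ennreal_ofReal).mul (hF.comp (measurable_id.const_mul t))
    rw [lintegral_const_mul _ h1] at key
    rw [lintegral_const_mul _ (hbodymeas t), key,
      stmt10_enn_cancel _ _ _ (ENNReal.ofReal_pos.mpr ht').ne' ENNReal.ofReal_ne_top]
  rw [setLIntegral_congr_fun measurableSet_Ioi hsub]
  have hW : Measurable fun z : ℝ × ℝ =>
      ENNReal.ofReal (p * f (z.1 ^ (-p)) * z.1 ^ (-α - p - 1)) * (ENNReal.ofReal z.1)⁻¹ *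
        (ENNReal.ofReal ((z.2 / z.1) ^ (-α - 1) * Real.exp (-((z.2 / z.1) ^ p))) * F z.2) :=
    (((hCpi.comp measurable_fst).ennreal_ofReal).mul
      (measurable_fst.ennreal_ofReal.inv)).mul
      (((hCp.comp (measurable_snd.div measurable_fst)).ennreal_ofReal).mul
        (hF.comp measurable_snd))
  rw [lintegral_lintegral_swap hW.aemeasurable]
  have hfin : ∀ u ∈ Ioi (0:ℝ),
      ∫⁻ t in Ioi (0:ℝ),
          ENNReal.ofReal (p * f (t ^ (-p)) * t ^ (-α - p - 1)) * (ENNReal.ofReal t)⁻¹ *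
            (ENNReal.ofReal ((u / t) ^ (-α - 1) * Real.exp (-((u / t) ^ p))) * F u)
        = ENNReal.ofReal (u ^ (-α - 1) * Real.exp (-(u ^ q))) * F u := by
    intro u hu
    have hstep : ∀ t : ℝ,
        ENNReal.ofReal (p * f (t ^ (-p)) * t ^ (-α - p - 1)) * (ENNReal.ofReal t)⁻¹ *
          (ENNReal.ofReal ((u / t) ^ (-α - 1) * Real.exp (-((u / t) ^ p))) * F u)
        = (ENNReal.ofReal (p * f (t ^ (-p)) * t ^ (-α - p - 1)) * (ENNReal.ofReal t)⁻¹ *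
            ENNReal.ofReal ((u / t) ^ (-α - 1) * Real.exp (-((u / t) ^ p)))) * F u := by
      intro t
      ring
    rw [lintegral_congr hstep]
    have h2 : Measurable fun t : ℝ =>
        ENNReal.ofReal (p * f (t ^ (-p)) * t ^ (-α - p - 1)) * (ENNReal.ofReal t)⁻¹ *
          ENNReal.ofReal ((u / t) ^ (-α - 1) * Real.exp (-((u / t) ^ p))) :=
      ((hCpi.ennreal_ofReal).mul (measurable_id.ennreal_ofReal.inv)).mul
        ((hCp.comp (measurable_const.div measurable_id)).ennreal_ofReal)
    rw [lintegral_mul_const _ h2]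
    rw [stmt10_heart α q p hq hqp f hf hu]
  rw [setLIntegral_congr_fun measurableSet_Ioi hfin]
  rw [stmt10_lintegral_psiMeasure α q hF]

lemma stmt10_upsilon_comp (α q p : ℝ) (hq : 0 < q) (hqp : q < p) (f : ℝ → ℝ)
    (hf : IsStableDensity (q / p) f) (M : Measure E) [SigmaFinite M]
    [SigmaFinite (Upsilon (psiMeasure α p) M)] :
    Upsilon (piMeasure f α p) (Upsilon (psiMeasure α p) M) = Upsilon (psiMeasure α q) M := by
  ext B hB
  rw [stmt10_upsilon_apply _ _ hB, stmt10_upsilon_apply _ _ hB]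
  have h1 : ∀ t : ℝ, (Upsilon (psiMeasure α p) M) ((fun x => t • x) ⁻¹' B)
      = ∫⁻ s, M ((fun x : E => (t * s) • x) ⁻¹' B) ∂(psiMeasure α p) := by
    intro t
    rw [stmt10_upsilon_apply _ _ ((measurable_const_smul t) hB)]
    apply lintegral_congr
    intro s
    congr 1
    ext x
    simp [smul_smul]
  rw [lintegral_congr h1]
  exact stmt10_convKey α q p hq hqp f hf (stmt10_measurable_section M hB)

lemma stmt10_upsilon_zero (ρ : Measure ℝ) (M : Measure E) [SigmaFinite M]
    (hρ : ρ {0} = 0) (hM : M {0} = 0) : Upsilon ρ M {0} = 0 := by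
  rw [Upsilon, Measure.map_apply stmt10_measurable_smul2 (measurableSet_singleton 0)]
  have hsub : (fun sx : ℝ × E => sx.1 • sx.2) ⁻¹' {0}
      ⊆ ({(0:ℝ)} ×ˢ (univ : Set E)) ∪ ((univ : Set ℝ) ×ˢ {(0:E)}) := by
    rintro ⟨s, x⟩ h
    simp only [mem_preimage, mem_singleton_iff, smul_eq_zero] at h
    rcases h with h | h
    · exact Or.inl (by simp [h])
    · exact Or.inr (by simp [h])
  refine le_antisymm ?_ zero_le
  calc (ρ.prod M) ((fun sx : ℝ × E => sx.1 • sx.2) ⁻¹' {0})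
      ≤ (ρ.prod M) (({(0:ℝ)} ×ˢ (univ : Set E)) ∪ ((univ : Set ℝ) ×ˢ {(0:E)})) :=
        measure_mono hsub
    _ ≤ (ρ.prod M) ({(0:ℝ)} ×ˢ (univ : Set E)) + (ρ.prod M) ((univ : Set ℝ) ×ˢ {(0:E)}) :=
        measure_union_le _ _
    _ = 0 := by rw [Measure.prod_prod, Measure.prod_prod, hρ, hM]; simp

lemma stmt10_upsilon_psi_mono (α q p : ℝ) (hq : 0 < q) (hqp : q < p)
    (M : Measure E) [SigmaFinite M] {g : E → ℝ≥0∞} (hg : Measurable g) :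
    ∫⁻ y, g y ∂(Upsilon (psiMeasure α p) M)
      ≤ ENNReal.ofReal (Real.exp 1) * ∫⁻ y, g y ∂(Upsilon (psiMeasure α q) M) := by
  rw [stmt10_upsilon_lintegral _ _ hg, stmt10_upsilon_lintegral _ _ hg]
  have hinner : Measurable fun s : ℝ => ∫⁻ x, g (s • x) ∂M :=
    Measurable.lintegral_prod_right' (hg.comp stmt10_measurable_smul2)
  have hCq : Measurable fun a : ℝ =>
      ENNReal.ofReal (a ^ (-α - 1) * Real.exp (-(a ^ q))) * ∫⁻ x, g (a • x) ∂M :=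
    (((measurable_id.pow_const _).mul
      ((measurable_id.pow_const q).neg.exp)).ennreal_ofReal).mul hinner
  rw [stmt10_lintegral_psiMeasure α p hinner, stmt10_lintegral_psiMeasure α q hinner,
    ← lintegral_const_mul _ hCq]
  apply setLIntegral_mono' measurableSet_Ioi
  intro a ha
  rw [← mul_assoc, ← ENNReal.ofReal_mul (Real.exp_pos 1).le]
  exact mul_le_mul_left
    (ENNReal.ofReal_le_ofReal (stmt10_psi_density_le α q p a hq hqp ha)) _

end Stmt10Aux

theorem stmt10 (d : ℕ) (hd : 1 ≤ d) (α q p : ℝ) (hα : α < 2) (hq : 0 < q) (hqp : q < p)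
    (f : ℝ → ℝ) (hf : IsStableDensity (q / p) f) :
    UpsilonDomain (E := EuclideanSpace ℝ (Fin d)) (psiMeasure α q) =
      {M ∈ UpsilonDomain (psiMeasure α p) |
        Upsilon (psiMeasure α p) M ∈ UpsilonDomain (piMeasure f α p)} ∧
    ∀ M ∈ UpsilonDomain (E := EuclideanSpace ℝ (Fin d)) (psiMeasure α q),
      Upsilon (piMeasure f α p) (Upsilon (psiMeasure α p) M) =
        Upsilon (psiMeasure α q) M := by
  have key : ∀ M : Measure (EuclideanSpace ℝ (Fin d)),
      M ∈ UpsilonDomain (psiMeasure α q) →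
      IsLevyMeasure (Upsilon (psiMeasure α p) M) := by
    rintro M ⟨hM, hMq⟩
    haveI := hM.1
    have h0 : Upsilon (psiMeasure α p) M {0} = 0 :=
      stmt10_upsilon_zero _ _ (stmt10_withDensity_singleton_zero _) hM.2.1
    have hfin : ∫⁻ x, ENNReal.ofReal (min (‖x‖ ^ 2) 1) ∂(Upsilon (psiMeasure α p) M) < ⊤ :=
      lt_of_le_of_lt (stmt10_upsilon_psi_mono α q p hq hqp M stmt10_gmeas)
        (ENNReal.mul_lt_top ENNReal.ofReal_lt_top hMq.2.2)
    exact ⟨stmt10_sigmaFinite_of_levy _ h0 hfin, h0, hfin⟩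
  have hcomp : ∀ M : Measure (EuclideanSpace ℝ (Fin d)), IsLevyMeasure M →
      IsLevyMeasure (Upsilon (psiMeasure α p) M) →
      Upsilon (piMeasure f α p) (Upsilon (psiMeasure α p) M) = Upsilon (psiMeasure α q) M := by
    intro M h1 h2
    haveI := h1.1
    haveI := h2.1
    exact stmt10_upsilon_comp α q p hq hqp f hf M
  constructor
  · ext M
    constructor
    · rintro ⟨hM, hMq⟩
      have hLp := key M ⟨hM, hMq⟩
      have hc := hcomp M hM hLp
      exact ⟨⟨hM, hLp⟩, hLp, by rw [hc]; exact hMq⟩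
    · rintro ⟨⟨hM, hLp⟩, _, hpi⟩
      have hc := hcomp M hM hLp
      exact ⟨hM, by rw [← hc]; exact hpi⟩
  · rintro M ⟨hM, hMq⟩
    exact hcomp M hM (key M ⟨hM, hMq⟩)
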